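/- Let A be a finite-dimensional unital ℂ-algebra with an antilinear antihomomorphism ‡ : A → A such that ‡∘‡ = id and ‡ is positive, meaning f‡ · f = 0 implies f = 0 for all f ∈ A. Then A is semisimple. -/

import Mathlib

open scoped ComplexConjugate

section Aux

open Polynomial

/-- Strip powers of `X` from a nonzero polynomial. -/
private lemma strip_X : ∀ (n : ℕ) (p : Polynomial ℂ), p.natDegree ≤ n → p ≠ 0 →
    ∃ m q, p = Polynomial.X ^ m * q ∧ Polynomial.coeff q 0 ≠ 0 := by
  intro n
  induction n with
  | zero =>
    intro p hdeg hp
    refine ⟨0, p, by simp, ?_⟩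
    have := Polynomial.eq_C_of_natDegree_eq_zero (Nat.le_zero.mp hdeg)
    intro h0
    apply hp
    rw [this, Polynomial.coeff_C_zero] at h0
    rw [this, h0, map_zero]
  | succ n ih =>
    intro p hdeg hp
    by_cases h0 : p.coeff 0 = 0
    · obtain ⟨r, rfl⟩ := Polynomial.X_dvd_iff.mpr h0
      have hr : r ≠ 0 := by rintro rfl; simp at hp
      have hdr : r.natDegree ≤ n := by
        have := Polynomial.natDegree_mul (Polynomial.X_ne_zero (R := ℂ)) hr
        rw [Polynomial.natDegree_X] at this
        omega
      obtain ⟨m, q, h1, h2⟩ := ih r hdr hr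
      exact ⟨m + 1, q, by rw [pow_succ, h1]; ring, h2⟩
    · exact ⟨0, p, by simp, h0⟩

/-- In a finite-dimensional ℂ-algebra, any non-nilpotent element has a nonzero
idempotent in the left ideal it generates. -/
private lemma exists_idem_aux {A : Type*} [Ring A] [Algebra ℂ A] [FiniteDimensional ℂ A]
    (h : A) (hn : ¬ IsNilpotent h) :
    ∃ e : A, e ≠ 0 ∧ e * e = e ∧ ∃ c : A, e = c * h := by
  have h0 : h ≠ 0 := by rintro rfl; exact hn ⟨1, by simp⟩
  have hA : Nontrivial A := by
    rcases subsingleton_or_nontrivial A with hs | hs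
    · exact absurd (Subsingleton.elim h 0) h0
    · exact hs
  have hint : IsIntegral ℂ h := IsIntegral.of_finite ℂ h
  have hp0 : minpoly ℂ h ≠ 0 := minpoly.ne_zero hint
  have hpe : Polynomial.aeval h (minpoly ℂ h) = 0 := minpoly.aeval ℂ h
  obtain ⟨m, q, hpq, hq0⟩ := strip_X (minpoly ℂ h).natDegree (minpoly ℂ h) le_rfl hp0
  rcases Nat.eq_zero_or_pos m with hm | hm
  · -- here h is invertible, the whole algebra is the ideal; take e = 1
    subst hm
    rw [pow_zero, one_mul] at hpq
    have hq : Polynomial.aeval h q = 0 := by rw [← hpq]; exact hpe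
    have hdiv := Polynomial.X_mul_divX_add q
    have hz : (Polynomial.aeval h) (Polynomial.X * q.divX + Polynomial.C (q.coeff 0)) = 0 := by
      rw [hdiv, hq]
    rw [map_add, map_mul, Polynomial.aeval_X, Polynomial.aeval_C] at hz
    set d := Polynomial.aeval h q.divX with hd
    have hcomm : d * h = h * d := by
      have h1 : d * h = Polynomial.aeval h (q.divX * Polynomial.X) := by
        rw [map_mul, Polynomial.aeval_X]
      have h2 : h * d = Polynomial.aeval h (Polynomial.X * q.divX) := by
        rw [map_mul, Polynomial.aeval_X]
      rw [h1, h2, mul_comm]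
    have hkey : h * d = algebraMap ℂ A (-(q.coeff 0)) := by
      rw [map_neg]
      exact eq_neg_of_add_eq_zero_left hz
    refine ⟨1, one_ne_zero, by rw [one_mul], (-(q.coeff 0))⁻¹ • d, ?_⟩
    rw [smul_mul_assoc, hcomm, hkey, Algebra.algebraMap_eq_smul_one, smul_smul,
      inv_mul_cancel₀ (by simpa using hq0), one_smul]
  · -- main case : m ≥ 1
    have hXq : IsCoprime (Polynomial.X : Polynomial ℂ) q := by
      rcases EuclideanDomain.dvd_or_coprime Polynomial.X q Polynomial.irreducible_X with hd | hc
      · exact absurd (Polynomial.X_dvd_iff.mp hd) hq0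
      · exact hc
    have hXqm : IsCoprime (Polynomial.X ^ m : Polynomial ℂ) q := hXq.pow_left
    obtain ⟨a, b, hab⟩ := hXqm
    refine ⟨Polynomial.aeval h (a * Polynomial.X ^ m), ?_, ?_, ?_⟩
    · -- nonzero
      intro hz
      have hdvd : minpoly ℂ h ∣ a * Polynomial.X ^ m := minpoly.dvd ℂ h hz
      rw [hpq, mul_comm a] at hdvd
      have hdvd2 : q ∣ a :=
        (mul_dvd_mul_iff_left (pow_ne_zero m (Polynomial.X_ne_zero (R := ℂ)))).mp hdvd
      obtain ⟨t, rfl⟩ := hdvd2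
      have hunit : IsUnit q :=
        IsUnit.of_mul_eq_one (a := q) (t * Polynomial.X ^ m + b) (by linear_combination hab)
      obtain ⟨u, hu, hCu⟩ := Polynomial.isUnit_iff.mp hunit
      have hz2 : Polynomial.aeval h (Polynomial.X ^ m * Polynomial.C u) = 0 := by
        rw [← hCu] at hpq
        rw [← hpq]; exact hpe
      rw [map_mul, map_pow, Polynomial.aeval_X, Polynomial.aeval_C] at hz2
      have hu0 : u ≠ 0 := hu.ne_zero
      have hm0 : h ^ m = 0 := by
        calc h ^ m = h ^ m * algebraMap ℂ A u * algebraMap ℂ A u⁻¹ := by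
              rw [mul_assoc, ← map_mul, mul_inv_cancel₀ hu0, map_one, mul_one]
        _ = 0 := by rw [hz2, zero_mul]
      exact hn ⟨m, hm0⟩
    · -- idempotent
      have hpoly : (a * Polynomial.X ^ m) * (a * Polynomial.X ^ m)
          = a * Polynomial.X ^ m - a * b * (minpoly ℂ h) := by
        rw [hpq]; linear_combination (a * Polynomial.X ^ m) * hab
      rw [← map_mul, hpoly, map_sub]
      have hz0 : Polynomial.aeval h (a * b * minpoly ℂ h) = 0 := by
        rw [map_mul, hpe, mul_zero]
      rw [hz0, sub_zero]
    · refine ⟨Polynomial.aeval h (a * Polynomial.X ^ (m - 1)), ?_⟩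
      have hx : a * Polynomial.X ^ m = (a * Polynomial.X ^ (m - 1)) * Polynomial.X := by
        rw [mul_assoc, ← pow_succ, Nat.sub_add_cancel hm]
      rw [hx, map_mul, Polynomial.aeval_X]

/-- The right annihilator of an element, as a left ideal. -/
private def rAnn {A : Type*} [Ring A] (e : A) : Submodule A A where
  carrier := {x | x * e = 0}
  add_mem' := by
    intro x y hx hy
    simp only [Set.mem_setOf_eq] at *
    rw [add_mul, hx, hy, add_zero]
  zero_mem' := by simp
  smul_mem' := by
    intro c x hx
    simp only [Set.mem_setOf_eq, smul_eq_mul] at *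
    rw [mul_assoc, hx, mul_zero]

private lemma mem_rAnn {A : Type*} [Ring A] {e x : A} : x ∈ rAnn e ↔ x * e = 0 := Iff.rfl

end Aux

/-- A finite-dimensional unital ℂ-algebra with a positive antilinear
involution is semisimple. -/
theorem semisimple_of_positive_involution
    {A : Type*} [Ring A] [Algebra ℂ A] [FiniteDimensional ℂ A]
    (dag : A → A)
    (hadd : ∀ x y, dag (x + y) = dag x + dag y)
    (hsmul : ∀ (c : ℂ) (x : A), dag (c • x) = (conj c) • dag x)
    (hmul : ∀ x y, dag (x * y) = dag y * dag x)
    (hinv : ∀ x, dag (dag x) = x)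
    (hpos : ∀ f : A, dag f * f = 0 → f = 0) :
    IsSemisimpleRing A := by
  -- a nonzero hermitian element is not nilpotent
  have key2 : ∀ y : A, dag y = y → y ≠ 0 → ¬ IsNilpotent y := by
    intro y hy hy0 ⟨k, hk⟩
    have hpow : ∀ n : ℕ, y ^ (2 ^ n) ≠ 0 ∧ dag (y ^ (2 ^ n)) = y ^ (2 ^ n) := by
      intro n
      induction n with
      | zero => simpa [pow_one] using ⟨hy0, hy⟩
      | succ n ih =>
        have h2 : y ^ (2 ^ (n + 1)) = y ^ (2 ^ n) * y ^ (2 ^ n) := by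
          rw [← pow_add]
          congr 1
          omega
        constructor
        · intro hz
          apply ih.1
          apply hpos
          rw [ih.2]
          rw [h2] at hz
          exact hz
        · rw [h2, hmul, ih.2]
    have h2k : y ^ (2 ^ k) = 0 := by
      have hle : (2 : ℕ) ^ k = k + (2 ^ k - k) := by
        have := Nat.lt_two_pow_self (n := k)
        omega
      rw [hle, pow_add, hk, zero_mul]
    exact (hpow k).1 h2k
  -- every left ideal has a "right identity" idempotent
  have main : ∀ n : ℕ, ∀ I : Submodule A A, Module.finrank ℂ (I.restrictScalars ℂ) = n →
      ∃ e : A, e ∈ I ∧ e * e = e ∧ ∀ x ∈ I, x * e = x := by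
    intro n
    induction n using Nat.strong_induction_on with
    | _ n ih =>
      intro I hIrank
      by_cases hbot : I = ⊥
      · refine ⟨0, by simp [hbot], by simp, ?_⟩
        intro x hx
        rw [hbot, Submodule.mem_bot] at hx
        simp [hx]
      · obtain ⟨x, hxI, hx0⟩ := (Submodule.ne_bot_iff I).mp hbot
        set h : A := dag x * x with hh
        have hhI : h ∈ I := by
          rw [hh, ← smul_eq_mul]
          exact I.smul_mem _ hxI
        have hh0 : h ≠ 0 := fun c => hx0 (hpos x c)
        have hhd : dag h = h := by rw [hh, hmul, hinv]
        obtain ⟨e₀, he₀0, he₀idem, c, hce⟩ := exists_idem_aux h (key2 h hhd hh0)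
        have he₀I : e₀ ∈ I := by
          rw [hce, ← smul_eq_mul]
          exact I.smul_mem _ hhI
        -- the complementary part of the ideal
        set I' : Submodule A A := I ⊓ rAnn e₀ with hI'
        have hI'le : I' ≤ I := inf_le_left
        have he₀nI' : e₀ ∉ I' := by
          intro hmem
          rw [hI', Submodule.mem_inf, mem_rAnn] at hmem
          exact he₀0 (by rw [← he₀idem]; exact hmem.2)
        have hlt : (I'.restrictScalars ℂ) < (I.restrictScalars ℂ) := by
          refine lt_of_le_of_ne (fun z hz => hI'le hz) ?_
          intro heq
          apply he₀nI'
          have : e₀ ∈ I.restrictScalars ℂ := he₀I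
          rw [← heq] at this
          exact this
        have hrank : Module.finrank ℂ (I'.restrictScalars ℂ) < n := by
          rw [← hIrank]
          exact Submodule.finrank_lt_finrank_of_lt hlt
        obtain ⟨f, hfI', hfidem, hf⟩ := ih _ hrank I' rfl
        have hfI : f ∈ I := hI'le hfI'
        have hfe₀ : f * e₀ = 0 := by
          rw [hI', Submodule.mem_inf, mem_rAnn] at hfI'
          exact hfI'.2
        set e : A := e₀ + (1 - e₀) * f with hedef
        have heI : e ∈ I := by
          rw [hedef]
          refine Submodule.add_mem _ he₀I ?_
          rw [← smul_eq_mul]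
          exact I.smul_mem _ hfI
        have he1 : e * e₀ = e₀ := by
          have step : e * e₀ = e₀ * e₀ + (1 - e₀) * (f * e₀) := by
            rw [hedef]; noncomm_ring
          rw [step, he₀idem, hfe₀, mul_zero, add_zero]
        have heidem : e * e = e := by
          have h3 : e - e * e₀ = (1 - e₀) * f := by
            rw [he1, hedef]; noncomm_ring
          have h4 : e * e = e * e₀ + (e - e * e₀) * f := by
            conv_lhs => rw [hedef]
            rw [hedef]; noncomm_ring
          rw [h4, h3, he1, mul_assoc, hfidem, ← hedef]
        refine ⟨e, heI, heidem, ?_⟩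
        intro z hz
        have hzI' : z - z * e₀ ∈ I' := by
          rw [hI', Submodule.mem_inf, mem_rAnn]
          constructor
          · refine Submodule.sub_mem _ hz ?_
            rw [← smul_eq_mul]
            exact I.smul_mem _ he₀I
          · rw [sub_mul, mul_assoc, he₀idem, sub_self]
        have h5 : (z - z * e₀) * f = z - z * e₀ := hf _ hzI'
        have h6 : z * e = z * e₀ + (z - z * e₀) * f := by
          rw [hedef]; noncomm_ring
        rw [h6, h5]
        noncomm_ring
  refine (isSemisimpleModule_iff A A).mpr ⟨fun I => ?_⟩
  obtain ⟨e, heI, heidem, hre⟩ := main _ I rfl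
  refine ⟨rAnn e, ?_, ?_⟩
  · rw [disjoint_iff]
    rw [Submodule.eq_bot_iff]
    intro z hz
    rw [Submodule.mem_inf, mem_rAnn] at hz
    rw [← hre z hz.1, hz.2]
  · rw [codisjoint_iff, eq_top_iff]
    intro z _
    refine Submodule.mem_sup.mpr ⟨z * e, ?_, z - z * e, ?_, by abel⟩
    · rw [← smul_eq_mul]
      exact I.smul_mem _ heI
    · rw [mem_rAnn, sub_mul, mul_assoc, heidem, sub_self]
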